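/- Let Φ = {φ_ν}_{ν=1}^∞ be a sequence of functions in 𝒜(ℝⁿ) satisfying condition (i₀): for each ν ∈ ℕ and each A > 0 there exists C_{ν,A} > 0 such that φ_ν(x) + A·ln(1+‖x‖) ≤ φ_{ν+1}(x) + C_{ν,A} for all x ∈ ℝⁿ; condition (i₁): for each ν there exist σ_ν > 1 and γ_ν > 0 with φ_ν(σ_ν x) ≤ φ_{ν+1}(x) + γ_ν for all x ∈ ℝⁿ; and condition (i₂): for each ν there exists K_ν > 0 with φ_ν(x+ξ) ≤ φ_{ν+1}(x) + K_ν for all x ∈ [0,∞)ⁿ and ξ ∈ [0,1]ⁿ. Set ψ_ν = φ_ν[e]. Then E(Φ) = ∪_ν E(φ_ν) and ℋ(Φ) = ∪_ν ℋ(φ_ν) coincide as sets of entire functions. -/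

import Mathlib

open MeasureTheory Filter
open scoped BigOperators Topology

set_option maxHeartbeats 1000000

noncomputable section

abbrev En (n : ℕ) := EuclideanSpace ℝ (Fin n)
abbrev Cn (n : ℕ) := EuclideanSpace ℂ (Fin n)

def expComp {n : ℕ} (g : En n → ℝ) : En n → ℝ := fun x => g (WithLp.toLp 2 (fun j => Real.exp (x j)))

def starC {n : ℕ} (g : En n → ℝ) (x : En n) : ℝ := ⨆ y : En n, (∑ j, x j * y j - g y)

def imv {n : ℕ} (z : Cn n) : En n := WithLp.toLp 2 (fun j => (z j).im)

def toC {n : ℕ} (x : En n) : Cn n := WithLp.toLp 2 (fun j => ((x j : ℝ) : ℂ))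

def pd {n : ℕ} (i : Fin n) (f : En n → ℂ) : En n → ℂ :=
  fun x => fderiv ℝ f x (EuclideanSpace.single i (1:ℝ))

def Dm {n : ℕ} (α : Fin n → ℕ) (f : En n → ℂ) : En n → ℂ :=
  (List.finRange n).foldr (fun i g => (pd i)^[α i] g) f

def IsA {n : ℕ} (g : En n → ℝ) : Prop :=
  Continuous g ∧ (∀ x : En n, g x = g (WithLp.toLp 2 (fun j => |x j|))) ∧
  (∀ x y : En n, (∀ j, 0 ≤ x j) → (∀ j, x j ≤ y j) → g x ≤ g y) ∧
  Tendsto (fun x : En n => g x / ‖x‖) (cocompact (En n)) atTop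

def pWeight {n : ℕ} (φ : En n → ℝ) (m : ℕ) (f : Cn n → ℂ) (z : Cn n) : ℝ :=
  ‖f z‖ * (1 + ‖z‖) ^ m * Real.exp (-(φ (imv z)))

def pNorm {n : ℕ} (φ : En n → ℝ) (m : ℕ) (f : Cn n → ℂ) : ℝ := ⨆ z : Cn n, pWeight φ m f z

def memE {n : ℕ} (φ : En n → ℝ) (f : Cn n → ℂ) : Prop :=
  Differentiable ℂ f ∧ ∀ m : ℕ, BddAbove (Set.range (pWeight φ m f))

def rhoWeight {n : ℕ} (ψ : En n → ℝ) (m : ℕ) (f : En n → ℂ) (x : En n) (α : Fin n → ℕ) : ℝ :=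
  (1 + ‖x‖) ^ m * ‖Dm α f x‖ * Real.exp (starC ψ (WithLp.toLp 2 (fun j => (α j : ℝ)))) / (∏ j, Nat.factorial (α j) : ℝ)

def rhoNorm {n : ℕ} (ψ : En n → ℝ) (m : ℕ) (f : En n → ℂ) : ℝ :=
  ⨆ p : En n × (Fin n → ℕ), rhoWeight ψ m f p.1 p.2

def memEps {n : ℕ} (ψ : En n → ℝ) (f : En n → ℂ) : Prop :=
  ContDiff ℝ ⊤ f ∧ ∀ m : ℕ, BddAbove (Set.range fun p : En n × (Fin n → ℕ) => rhoWeight ψ m f p.1 p.2)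


/-- Young–Fenchel conjugate with values in the extended reals. -/
def econj {n : ℕ} (g : En n → EReal) (x : En n) : EReal :=
  ⨆ y : En n, (((∑ j, x j * y j : ℝ) : EReal) - g y)

/-- The second Young–Fenchel conjugate `(ψ*)*` of a real-valued function `ψ`. -/
def ddconj {n : ℕ} (ψ : En n → ℝ) : En n → EReal :=
  econj (econj (fun y => ((ψ y : ℝ) : EReal)))

/-- The weight `|f(z)|(1+‖z‖)^m e^{-(ψ*)*(ln(1+|Im z₁|),…,ln(1+|Im zₙ|))}` with `ψ = φ[e]`
(the value of `(ψ*)*` at the relevant points being finite, `EReal.toReal` returns it). -/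
def sigWeight {n : ℕ} (φ : En n → ℝ) (m : ℕ) (f : Cn n → ℂ) (z : Cn n) : ℝ :=
  ‖f z‖ * (1 + ‖z‖) ^ m *
    Real.exp (-(ddconj (expComp φ) (WithLp.toLp 2 (fun j => Real.log (1 + |(z j).im|)))).toReal)

def memH {n : ℕ} (φ : En n → ℝ) (f : Cn n → ℂ) : Prop :=
  Differentiable ℂ f ∧ ∀ m : ℕ, BddAbove (Set.range (sigWeight φ m f))

namespace S5


variable {n : ℕ}

lemma coord_le_norm (z : Cn n) (j : Fin n) : ‖z j‖ ≤ ‖z‖ := by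
  rw [EuclideanSpace.norm_eq]
  have h : ‖z j‖ = Real.sqrt (‖z j‖ ^ 2) := by
    rw [Real.sqrt_sq (norm_nonneg _)]
  rw [h]
  exact Real.sqrt_le_sqrt (Finset.single_le_sum (f := fun k => ‖z k‖ ^ 2)
    (fun i _ => sq_nonneg _) (Finset.mem_univ j))

lemma coord_le_norm' (x : En n) (j : Fin n) : |x j| ≤ ‖x‖ := by
  rw [EuclideanSpace.norm_eq]
  have h : |x j| = Real.sqrt (‖x j‖ ^ 2) := by
    rw [Real.sqrt_sq (norm_nonneg _)]; rfl
  rw [h]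
  exact Real.sqrt_le_sqrt (Finset.single_le_sum (f := fun k => ‖x k‖ ^ 2)
    (fun i _ => sq_nonneg _) (Finset.mem_univ j))

lemma norm_le_sum (z : Cn n) : ‖z‖ ≤ ∑ j, ‖z j‖ := by
  rw [EuclideanSpace.norm_eq]
  have h2 : ∑ j, ‖z j‖ ^ 2 ≤ (∑ j, ‖z j‖) ^ 2 := by
    rw [sq]
    have : ∀ j ∈ Finset.univ, ‖z j‖ ^ 2 ≤ ‖z j‖ * ∑ k, ‖z k‖ := by
      intro j _
      rw [sq]
      have hj : ‖z j‖ ≤ ∑ k, ‖z k‖ :=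
        Finset.single_le_sum (f := fun k => ‖z k‖)
          (fun i _ => norm_nonneg _) (Finset.mem_univ j)
      exact mul_le_mul_of_nonneg_left hj (norm_nonneg _)
    calc ∑ j, ‖z j‖ ^ 2 ≤ ∑ j, ‖z j‖ * ∑ k, ‖z k‖ :=
          Finset.sum_le_sum this
      _ = (∑ j, ‖z j‖) * ∑ k, ‖z k‖ := by
          rw [← Finset.sum_mul]
  calc Real.sqrt (∑ j, ‖z j‖ ^ 2) ≤ Real.sqrt ((∑ j, ‖z j‖) ^ 2) :=
        Real.sqrt_le_sqrt h2
    _ = ∑ j, ‖z j‖ := Real.sqrt_sq (Finset.sum_nonneg fun i _ => norm_nonneg _)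

lemma one_add_sum_le_prod (c : Fin n → ℝ) (hc : ∀ i, 0 ≤ c i) :
    1 + ∑ i, c i ≤ ∏ i, (1 + c i) := by
  classical
  have : ∀ s : Finset (Fin n), 1 + ∑ i ∈ s, c i ≤ ∏ i ∈ s, (1 + c i) := by
    intro s
    induction s using Finset.induction_on with
    | empty => simp
    | insert a s' hnot ih =>
      rw [Finset.sum_insert hnot, Finset.prod_insert hnot]
      have h1 : (1 + c a) * (1 + ∑ i ∈ s', c i) ≤ (1 + c a) * ∏ i ∈ s', (1 + c i) :=
        mul_le_mul_of_nonneg_left ih (by linarith [hc a])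
      have h2 : 0 ≤ c a * ∑ i ∈ s', c i :=
        mul_nonneg (hc a) (Finset.sum_nonneg fun i _ => hc i)
      nlinarith
  exact this Finset.univ


variable {n : ℕ}

lemma ddconj_le (ψ : En n → ℝ) (x : En n) : ddconj ψ x ≤ ((ψ x : ℝ) : EReal) := by
  refine iSup_le fun y => ?_
  have h1 : ((∑ j, x j * y j : ℝ) : EReal) - ((ψ x : ℝ) : EReal) ≤
      econj (fun s => ((ψ s : ℝ) : EReal)) y := by
    refine le_trans ?_ (le_iSup (fun s => (((∑ j, y j * s j : ℝ) : EReal) - ((ψ s : ℝ) : EReal))) x)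
    have : (∑ j, x j * y j) = (∑ j, y j * x j) := by
      exact Finset.sum_congr rfl fun j _ => mul_comm _ _
    rw [this]
  calc ((∑ j, x j * y j : ℝ) : EReal) - econj (fun s => ((ψ s : ℝ) : EReal)) y
      ≤ ((∑ j, x j * y j : ℝ) : EReal) - (((∑ j, x j * y j : ℝ) : EReal) - ((ψ x : ℝ) : EReal)) :=
        EReal.sub_le_sub le_rfl h1
    _ = ((ψ x : ℝ) : EReal) := by
        rw [← EReal.coe_sub, ← EReal.coe_sub]
        norm_cast
        ring

lemma le_ddconj (ψ : En n → ℝ) (a : En n) (c : ℝ)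
    (hmin : ∀ v : En n, (∑ j, a j * v j) + c ≤ ψ v) (u : En n) :
    (((∑ j, u j * a j) + c : ℝ) : EReal) ≤ ddconj ψ u := by
  have h1 : econj (fun s => ((ψ s : ℝ) : EReal)) a ≤ ((-c : ℝ) : EReal) := by
    refine iSup_le fun s => ?_
    rw [← EReal.coe_sub]
    exact_mod_cast (by linarith [hmin s] : (∑ j, a j * s j) - ψ s ≤ -c)
  refine le_trans ?_ (le_iSup (fun y => (((∑ j, u j * y j : ℝ) : EReal) -
    econj (fun s => ((ψ s : ℝ) : EReal)) y)) a)
  calc (((∑ j, u j * a j) + c : ℝ) : EReal)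
      = ((∑ j, u j * a j : ℝ) : EReal) - ((-c : ℝ) : EReal) := by
        have hh : (∑ j, u j * a j) + c = (∑ j, u j * a j) - (-c) := by ring
        rw [hh, EReal.coe_sub]
    _ ≤ ((∑ j, u j * a j : ℝ) : EReal) - econj (fun s => ((ψ s : ℝ) : EReal)) a :=
        EReal.sub_le_sub le_rfl h1

lemma toReal_bounds {d : EReal} {lo hi : ℝ} (h1 : ((lo : ℝ) : EReal) ≤ d)
    (h2 : d ≤ ((hi : ℝ) : EReal)) : lo ≤ d.toReal ∧ d.toReal ≤ hi := by
  have hb : d ≠ ⊥ := fun h => by simp [h] at h1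
  have ht : d ≠ ⊤ := fun h => by simp [h] at h2
  constructor
  · have := EReal.toReal_le_toReal h1 (EReal.coe_ne_bot lo) ht
    simpa using this
  · have := EReal.toReal_le_toReal h2 hb (EReal.coe_ne_top hi)
    simpa using this

lemma isA_lower {g : En n → ℝ} (h : IsA g) : ∃ m₀ : ℝ, ∀ x, m₀ ≤ g x := by
  have h4 : ∀ᶠ x : En n in cocompact (En n), (1:ℝ) ≤ g x / ‖x‖ :=
    h.2.2.2 (eventually_ge_atTop 1)
  rw [Filter.hasBasis_cocompact.eventually_iff] at h4
  obtain ⟨K, hK, hKx⟩ := h4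
  have hbb : BddBelow (g '' K) := hK.bddBelow_image h.1.continuousOn
  obtain ⟨m₁, hm₁⟩ := hbb
  refine ⟨min m₁ 0, fun x => ?_⟩
  by_cases hx : x ∈ K
  · exact le_trans (min_le_left _ _) (hm₁ (Set.mem_image_of_mem g hx))
  · have h5 : (1:ℝ) ≤ g x / ‖x‖ := hKx hx
    by_cases h0 : ‖x‖ = 0
    · rw [h0] at h5; simp at h5; linarith
    · have hpos : 0 < ‖x‖ := lt_of_le_of_ne (norm_nonneg x) (Ne.symm h0)
      have : ‖x‖ ≤ g x := by
        rw [le_div_iff₀ hpos] at h5; linarith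
      exact le_trans (min_le_right _ _) (le_trans (norm_nonneg x) this)


variable {n : ℕ}

def mkz (x y : En n) : Cn n := WithLp.toLp 2 (fun j => (x j : ℂ) + (y j : ℂ) * Complex.I)

lemma imv_mkz (x y : En n) : imv (mkz x y) = y := by ext j; simp [imv, mkz]

lemma mkz_self (z : Cn n) : mkz (WithLp.toLp 2 (fun j => (z j).re)) (imv z) = z := by
  ext j; exact Complex.re_add_im (z j)

lemma differentiable_mkC {F : ℂ → Cn n} (hF : ∀ j, Differentiable ℂ fun w => F w j) :
    Differentiable ℂ F :=
  ((PiLp.continuousLinearEquiv 2 ℂ (fun _ : Fin n => ℂ)).symm.differentiable).comp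
    (differentiable_pi.mpr hF)

lemma continuous_mkE {X : Type*} [TopologicalSpace X] {F : X → En n}
    (hF : ∀ j, Continuous fun q => F q j) : Continuous F :=
  ((PiLp.continuousLinearEquiv 2 ℝ (fun _ : Fin n => ℝ)).symm.continuous).comp
    (continuous_pi hF)

lemma continuous_mkCX {X : Type*} [TopologicalSpace X] {F : X → Cn n}
    (hF : ∀ j, Continuous fun q => F q j) : Continuous F :=
  ((PiLp.continuousLinearEquiv 2 ℂ (fun _ : Fin n => ℂ)).symm.continuous).comp
    (continuous_pi hF)

lemma hadamard_step (g : Cn n → ℂ) (hg : Differentiable ℂ g) (Φ : En n → ℝ) (hΦc : Continuous Φ)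
    (hb : ∀ z : Cn n, ‖g z‖ ≤ Real.exp (Φ (imv z)))
    (y₀ y₁ : En n) (r₀ r₁ : ℝ)
    (h₀ : ∀ x : En n, ‖g (mkz x y₀)‖ ≤ Real.exp r₀)
    (h₁ : ∀ x : En n, ‖g (mkz x y₁)‖ ≤ Real.exp r₁)
    (a b : ℝ) (ha : 0 ≤ a) (hb' : 0 ≤ b) (hab : a + b = 1) (x : En n) :
    ‖g (mkz x (a • y₀ + b • y₁))‖ ≤ Real.exp (a * r₀ + b * r₁) := by
  classical
  set slice : ℂ → Cn n := fun w =>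
    (WithLp.toLp 2 (fun j => (x j : ℂ) + ((y₀ j : ℂ) + w * ((y₁ j : ℂ) - (y₀ j : ℂ))) * Complex.I) : Cn n)
    with hslice_def
  have hslice : ∀ w : ℂ, slice w =
      mkz (WithLp.toLp 2 (fun j => x j - w.im * (y₁ j - y₀ j))) (WithLp.toLp 2 (fun j => y₀ j + w.re * (y₁ j - y₀ j))) := by
    intro w
    ext j
    simp only [hslice_def, mkz, PiLp.toLp_apply]
    apply Complex.ext <;>
      simp [Complex.add_re, Complex.add_im, Complex.mul_re, Complex.mul_im] <;> ring
  set h : ℂ → ℂ := fun w => g (slice w) with hh_def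
  have hsd : Differentiable ℂ slice := by
    apply differentiable_mkC
    intro j
    simp only [hslice_def, PiLp.toLp_apply]
    exact (differentiable_const _).fun_add
      (((differentiable_const _).fun_add (differentiable_id.fun_mul (differentiable_const _))).fun_mul
        (differentiable_const _))
  have hd : DiffContOnCl ℂ h (Complex.HadamardThreeLines.verticalStrip 0 1) :=
    (hg.comp hsd).diffContOnCl
  -- bound on the closed strip
  set θ : ℝ → En n := fun s => (WithLp.toLp 2 (fun j => y₀ j + s * (y₁ j - y₀ j)) : En n) with hθ_def
  have hθc : Continuous θ := continuous_mkE fun j => by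
    simp only [hθ_def, PiLp.toLp_apply]; exact continuous_const.add (continuous_id.mul continuous_const)
  have hKb : BddAbove ((Φ ∘ θ) '' Set.Icc 0 1) :=
    isCompact_Icc.bddAbove_image (hΦc.comp hθc).continuousOn
  obtain ⟨M, hM⟩ := hKb
  have hMb : ∀ s ∈ Set.Icc (0:ℝ) 1, Φ (θ s) ≤ M := fun s hs =>
    hM (Set.mem_image_of_mem _ hs)
  have habs : ∀ w : ℂ, ‖h w‖ ≤ Real.exp (Φ (θ w.re)) := by
    intro w
    show ‖g (slice w)‖ ≤ Real.exp (Φ (θ w.re))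
    rw [hslice w]
    have h1 := hb (mkz (WithLp.toLp 2 (fun j => x j - w.im * (y₁ j - y₀ j)))
      (WithLp.toLp 2 (fun j => y₀ j + w.re * (y₁ j - y₀ j))))
    rwa [imv_mkz] at h1
  have hB : BddAbove ((norm ∘ h) '' Complex.HadamardThreeLines.verticalClosedStrip 0 1) := by
    refine ⟨Real.exp M, ?_⟩
    rintro v ⟨w, hw, rfl⟩
    have : ‖h w‖ ≤ Real.exp (Φ (θ w.re)) := habs w
    calc ‖h w‖ ≤ Real.exp (Φ (θ w.re)) := this
      _ ≤ Real.exp M := Real.exp_le_exp.2 (hMb w.re hw)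
  -- boundary bounds
  have hline0 : ∀ w ∈ Complex.re ⁻¹' {(0:ℝ)}, ‖h w‖ ≤ Real.exp r₀ := by
    intro w hw
    have hwre : w.re = 0 := hw
    have hy : WithLp.toLp 2 (fun j => y₀ j + w.re * (y₁ j - y₀ j)) = y₀ := by
      ext j; rw [PiLp.toLp_apply, hwre]; ring
    show ‖g (slice w)‖ ≤ Real.exp r₀
    rw [hslice w, hy]; exact h₀ _
  have hline1 : ∀ w ∈ Complex.re ⁻¹' {(1:ℝ)}, ‖h w‖ ≤ Real.exp r₁ := by
    intro w hw
    have hwre : w.re = 1 := hw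
    have hy : WithLp.toLp 2 (fun j => y₀ j + w.re * (y₁ j - y₀ j)) = y₁ := by
      ext j; rw [PiLp.toLp_apply, hwre]; ring
    show ‖g (slice w)‖ ≤ Real.exp r₁
    rw [hslice w, hy]; exact h₁ _
  have hzmem : (b : ℂ) ∈ Complex.HadamardThreeLines.verticalClosedStrip 0 1 := by
    simp only [Complex.HadamardThreeLines.verticalClosedStrip, Set.mem_preimage,
      Complex.ofReal_re, Set.mem_Icc]
    exact ⟨hb', by linarith⟩
  have hmain := Complex.HadamardThreeLines.norm_le_interp_of_mem_verticalClosedStrip₀₁'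
    h hzmem hd hB hline0 hline1
  have hre : (b : ℂ).re = b := Complex.ofReal_re b
  rw [hre] at hmain
  have hpow0 : Real.exp r₀ ^ (1 - b) = Real.exp (r₀ * (1 - b)) := by
    rw [Real.rpow_def_of_pos (Real.exp_pos _), Real.log_exp]
  have hpow1 : Real.exp r₁ ^ b = Real.exp (r₁ * b) := by
    rw [Real.rpow_def_of_pos (Real.exp_pos _), Real.log_exp]
  have hxeq : WithLp.toLp 2 (fun j => x j - ((b : ℂ)).im * (y₁ j - y₀ j)) = x := by
    ext j; simp
  have hyeq : WithLp.toLp 2 (fun j => y₀ j + ((b : ℂ)).re * (y₁ j - y₀ j)) = a • y₀ + b • y₁ := by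
    ext j
    have h1 : (a • y₀ + b • y₁) j = a * y₀ j + b * y₁ j := rfl
    rw [PiLp.toLp_apply, h1, Complex.ofReal_re]
    have ha1 : a = 1 - b := by linarith
    rw [ha1]; ring
  have hslb : slice (b : ℂ) = mkz x (a • y₀ + b • y₁) := by
    rw [hslice ((b : ℂ)), hxeq, hyeq]
  have hfin : ‖h (b:ℂ)‖ ≤ Real.exp (a * r₀ + b * r₁) := by
    calc ‖h (b:ℂ)‖ ≤ Real.exp r₀ ^ (1 - b) * Real.exp r₁ ^ b := hmain
      _ = Real.exp (a * r₀ + b * r₁) := by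
          rw [hpow0, hpow1, ← Real.exp_add]
          congr 1
          have ha1 : a = 1 - b := by linarith
          rw [ha1]; ring
  have heq : ‖h (b:ℂ)‖ = ‖g (mkz x (a • y₀ + b • y₁))‖ := by
    show ‖g (slice (b:ℂ))‖ = _
    rw [hslb]
  rw [heq] at hfin
  exact hfin

lemma key_minorant (g : Cn n → ℂ) (hg : Differentiable ℂ g) (Φ : En n → ℝ) (hΦc : Continuous Φ)
    (hb : ∀ z : Cn n, ‖g z‖ ≤ Real.exp (Φ (imv z)))
    (z₀ : Cn n) (hz₀ : g z₀ ≠ 0) :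
    ∃ (t : En n) (c : ℝ), (∀ y : En n, (∑ j, t j * y j) + c ≤ Φ y) ∧
      Real.log (‖g z₀‖) - 1 ≤ (∑ j, t j * imv z₀ j) + c := by
  classical
  set p : En n := imv z₀ with hp_def
  set S : Set ((En n) × ℝ) :=
    {q | ∀ x : En n, ‖g (mkz x q.1)‖ ≤ Real.exp q.2} with hS_def
  have hmem : ∀ y : En n, ∀ r : ℝ, Φ y ≤ r → (y, r) ∈ S := by
    intro y r hr x
    have h1 := hb (mkz x y)
    rw [imv_mkz] at h1
    exact le_trans h1 (Real.exp_le_exp.2 hr)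
  have hclosed : IsClosed S := by
    have hSeq : S = ⋂ x : En n,
        {q : (En n) × ℝ | ‖g (mkz x q.1)‖ ≤ Real.exp q.2} := by
      ext q; simp [hS_def, Set.mem_iInter]
    rw [hSeq]
    refine isClosed_iInter fun x => ?_
    have hc1 : Continuous fun q : (En n) × ℝ => ‖g (mkz x q.1)‖ := by
      apply continuous_norm.comp
      apply hg.continuous.comp
      apply continuous_mkCX
      intro j
      show Continuous fun q : (En n) × ℝ => (x j : ℂ) + (q.1 j : ℂ) * Complex.I
      have : Continuous fun q : (En n) × ℝ => q.1 j :=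
        (continuous_apply j).comp ((PiLp.continuous_ofLp 2 _).comp continuous_fst)
      exact continuous_const.add ((Complex.continuous_ofReal.comp this).mul continuous_const)
    exact isClosed_le hc1 (Real.continuous_exp.comp continuous_snd)
  have hconv : Convex ℝ S := by
    rintro ⟨y₀, r₀⟩ h₀ ⟨y₁, r₁⟩ h₁ a b ha hb' hab
    intro x
    have hq1 : (a • (y₀, r₀) + b • (y₁, r₁)).1 = a • y₀ + b • y₁ := rfl
    have hq2 : (a • (y₀, r₀) + b • (y₁, r₁)).2 = a * r₀ + b * r₁ := rfl
    rw [hq1, hq2]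
    exact hadamard_step g hg Φ hΦc hb y₀ y₁ r₀ r₁ (fun x' => h₀ x') (fun x' => h₁ x')
      a b ha hb' hab x
  have habs_pos : 0 < ‖g z₀‖ := norm_pos_iff.mpr hz₀
  set q₀ : (En n) × ℝ := (p, Real.log (‖g z₀‖) - 1) with hq₀_def
  have hq₀ : q₀ ∉ S := by
    intro hq
    have h1 := hq (WithLp.toLp 2 (fun j => (z₀ j).re))
    rw [show mkz (WithLp.toLp 2 (fun j => (z₀ j).re)) q₀.1 = z₀ from mkz_self z₀] at h1
    have h2 : Real.exp (Real.log (‖g z₀‖) - 1)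
        = ‖g z₀‖ * Real.exp (-1) := by
      rw [Real.exp_sub, Real.exp_log habs_pos]
      rw [Real.exp_neg]
      ring
    rw [h2] at h1
    have h3 : Real.exp (-1 : ℝ) < 1 := Real.exp_lt_one_iff.mpr (by norm_num)
    nlinarith
  obtain ⟨L, u, hLS, hLq⟩ := geometric_hahn_banach_closed_point hconv hclosed hq₀
  -- decompose L
  set T : (En n) →L[ℝ] ℝ := L.comp (ContinuousLinearMap.inl ℝ (En n) ℝ) with hT_def
  set β : ℝ := L (0, 1) with hβ_def
  have hdec : ∀ (y : En n) (r : ℝ), L (y, r) = T y + r * β := by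
    intro y r
    have h1 : (y, r) = (y, (0:ℝ)) + r • ((0 : En n), (1:ℝ)) := by
      simp [Prod.ext_iff]
    rw [h1, map_add, L.map_smul]
    simp only [hT_def, ContinuousLinearMap.comp_apply, ContinuousLinearMap.inl_apply,
      smul_eq_mul, hβ_def]
  -- β < 0
  have hβneg : β < 0 := by
    rcases lt_trichotomy β 0 with h | h | h
    · exact h
    · exfalso
      have h1 : L (p, Φ p) < u := hLS _ (hmem p (Φ p) le_rfl)
      have h2 : u < L (p, Real.log (‖g z₀‖) - 1) := hLq
      rw [hdec] at h1 h2
      rw [h] at h1 h2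
      simp at h1 h2
      linarith
    · exfalso
      set s₀ : ℝ := max (Φ p) ((u - T p) / β + 1) with hs₀_def
      have hmem' : (p, s₀) ∈ S := hmem p s₀ (le_max_left _ _)
      have h1 : L (p, s₀) < u := hLS _ hmem'
      rw [hdec] at h1
      have h2 : (u - T p) / β + 1 ≤ s₀ := le_max_right _ _
      have h3 : ((u - T p) / β + 1) * β ≤ s₀ * β := by
        exact mul_le_mul_of_nonneg_right h2 (le_of_lt h)
      rw [add_mul, div_mul_cancel₀ _ (ne_of_gt h), one_mul] at h3
      linarith
  -- the affine minorant
  have haff : ∀ y : En n, (u - T y) / β ≤ Φ y := by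
    intro y
    have h1 : L (y, Φ y) < u := hLS _ (hmem y (Φ y) le_rfl)
    rw [hdec] at h1
    rw [div_le_iff_of_neg hβneg]
    linarith
  have hval : Real.log (‖g z₀‖) - 1 ≤ (u - T p) / β := by
    have h2 : u < T p + (Real.log (‖g z₀‖) - 1) * β := by
      have h3 : u < L (p, Real.log (‖g z₀‖) - 1) := hLq
      rwa [hdec] at h3
    rw [le_div_iff_of_neg hβneg]
    linarith
  -- coordinates of T
  have hT_sum : ∀ y : En n, T y = ∑ j, y j * T (EuclideanSpace.single j (1:ℝ)) := by
    intro y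
    have hy : y = ∑ j, y j • EuclideanSpace.single j (1:ℝ) := by
      have hrepr := (EuclideanSpace.basisFun (Fin n) ℝ).sum_repr y
      simp only [EuclideanSpace.basisFun_apply, EuclideanSpace.basisFun_repr] at hrepr
      exact hrepr.symm
    conv_lhs => rw [hy]
    rw [map_sum]
    refine Finset.sum_congr rfl fun j _ => ?_
    rw [T.map_smul, smul_eq_mul]
  have h1 : ∀ y : En n, (∑ j, (-(T (EuclideanSpace.single j (1:ℝ))) / β) * y j) + u / β
      = (u - T y) / β := by
    intro y
    rw [hT_sum y, sub_div, Finset.sum_div]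
    have hterm : ∀ j ∈ Finset.univ, (-(T (EuclideanSpace.single j (1:ℝ))) / β) * y j
        = -(y j * T (EuclideanSpace.single j (1:ℝ)) / β) := fun j _ => by ring
    rw [Finset.sum_congr rfl hterm, Finset.sum_neg_distrib]
    ring
  refine ⟨(WithLp.toLp 2 (fun j => -(T (EuclideanSpace.single j (1:ℝ))) / β) : En n), u / β, ?_, ?_⟩
  · intro y
    show (∑ j, -(T (EuclideanSpace.single j (1:ℝ))) / β * y j) + u / β ≤ Φ y
    rw [h1 y]
    exact haff y
  · show Real.log (‖g z₀‖) - 1 ≤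
      (∑ j, -(T (EuclideanSpace.single j (1:ℝ))) / β * p j) + u / β
    rw [h1 p]
    exact hval

lemma easy_dir (φ : ℕ → En n → ℝ) (hA : ∀ ν, IsA (φ ν))
    (hi2 : ∀ ν : ℕ, ∃ K > (0:ℝ), ∀ x ξ : En n, (∀ j, 0 ≤ x j) → (∀ j, ξ j ∈ Set.Icc (0:ℝ) 1) →
      φ ν (x + ξ) ≤ φ (ν+1) x + K)
    (ν : ℕ) (f : Cn n → ℂ) (hf : memH (φ ν) f) : memE (φ (ν+1)) f := by
  obtain ⟨hdiff, hbdd⟩ := hf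
  refine ⟨hdiff, fun m => ?_⟩
  obtain ⟨B, hB⟩ := hbdd m
  obtain ⟨K, hK, hKi⟩ := hi2 ν
  obtain ⟨m₀, hm₀⟩ := isA_lower (hA ν)
  refine ⟨Real.exp K * B, ?_⟩
  rintro _ ⟨z₀, rfl⟩
  set p : En n := imv z₀ with hp
  set u₀ : En n := WithLp.toLp 2 (fun j => Real.log (1 + |(z₀ j).im|)) with hu₀
  have hpj : ∀ j, p j = (z₀ j).im := fun j => rfl
  have hup : expComp (φ ν) u₀ = φ ν (WithLp.toLp 2 (fun j => 1 + |p j|)) := by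
    unfold expComp
    congr 2
    funext j
    rw [hu₀, PiLp.toLp_apply]
    rw [Real.exp_log (by positivity)]
    rfl
  have hle : ddconj (expComp (φ ν)) u₀ ≤ ((expComp (φ ν) u₀ : ℝ) : EReal) :=
    ddconj_le _ _
  have hge : ((m₀ : ℝ) : EReal) ≤ ddconj (expComp (φ ν)) u₀ := by
    have h0 := le_ddconj (expComp (φ ν)) 0 m₀ (fun v => by
      have : (∑ j, (0 : En n) j * v j) = 0 := by
        refine Finset.sum_eq_zero fun j _ => ?_
        show (0:ℝ) * v j = 0
        ring
      rw [this, zero_add]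
      exact hm₀ _) u₀
    have h1 : (∑ j, u₀ j * (0 : En n) j) + m₀ = m₀ := by
      have : (∑ j, u₀ j * (0 : En n) j) = 0 := by
        refine Finset.sum_eq_zero fun j _ => ?_
        show u₀ j * 0 = 0
        ring
      rw [this, zero_add]
    rwa [h1] at h0
  obtain ⟨h1, h2⟩ := toReal_bounds hge hle
  have hstep : φ ν (WithLp.toLp 2 (fun j => 1 + |p j|)) ≤ φ (ν+1) p + K := by
    have habs : φ (ν+1) (WithLp.toLp 2 (fun j => |p j|)) = φ (ν+1) p := ((hA (ν+1)).2.1 p).symm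
    have h3 := hKi (WithLp.toLp 2 (fun j => |p j|)) (WithLp.toLp 2 (fun _ => 1)) (fun j => abs_nonneg _)
      (fun j => ⟨zero_le_one, le_rfl⟩)
    rw [habs] at h3
    have h4 : (WithLp.toLp 2 (fun j => |p j|) + WithLp.toLp 2 (fun _ => (1:ℝ)) : En n) = (WithLp.toLp 2 (fun j => 1 + |p j|) : En n) := by
      ext j
      show |p j| + 1 = 1 + |p j|
      ring
    rwa [h4] at h3
  have hfb : sigWeight (φ ν) m f z₀ ≤ B := hB (Set.mem_range_self z₀)
  have hmono : Real.exp (-(φ (ν+1) p)) ≤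
      Real.exp K * Real.exp (-(ddconj (expComp (φ ν)) u₀).toReal) := by
    rw [← Real.exp_add]
    apply Real.exp_le_exp.2
    rw [hup] at h2
    linarith
  show pWeight (φ (ν+1)) m f z₀ ≤ Real.exp K * B
  unfold pWeight
  have hnn : 0 ≤ ‖f z₀‖ * (1 + ‖z₀‖) ^ m := by positivity
  calc ‖f z₀‖ * (1 + ‖z₀‖) ^ m * Real.exp (-(φ (ν+1) (imv z₀)))
      ≤ ‖f z₀‖ * (1 + ‖z₀‖) ^ m *
        (Real.exp K * Real.exp (-(ddconj (expComp (φ ν)) u₀).toReal)) :=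
        mul_le_mul_of_nonneg_left hmono hnn
    _ = Real.exp K * sigWeight (φ ν) m f z₀ := by
        unfold sigWeight
        rw [← hu₀]
        ring
    _ ≤ Real.exp K * B := mul_le_mul_of_nonneg_left hfb (le_of_lt (Real.exp_pos K))

lemma le_of_sq_le_sq' {a b : ℝ} (h : a^2 ≤ b^2) (hb : 0 ≤ b) : a ≤ b := by
  nlinarith [sq_nonneg (a - b), sq_nonneg (a + b)]

lemma hard_dir (φ : ℕ → En n → ℝ) (hA : ∀ ν, IsA (φ ν))
    (hi0 : ∀ ν : ℕ, ∀ A > (0:ℝ), ∃ C > (0:ℝ), ∀ x : En n,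
      φ ν x + A * Real.log (1 + ‖x‖) ≤ φ (ν+1) x + C)
    (ν : ℕ) (f : Cn n → ℂ) (hf : memE (φ ν) f) : memH (φ (ν+1)) f := by
  obtain ⟨hdiff, hbdd⟩ := hf
  refine ⟨hdiff, fun m => ?_⟩
  obtain ⟨B, hB⟩ := hbdd (n*m)
  set Bp : ℝ := max B 1 with hBp
  have hBp1 : (0:ℝ) < Bp := lt_of_lt_of_le one_pos (le_max_right _ _)
  obtain ⟨C₀, hC₀pos, hC₀⟩ := hi0 ν ((n*m : ℕ) + 1) (by positivity)
  refine ⟨Real.exp (1 + C₀ + Real.log Bp) * 2^(n*m), ?_⟩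
  rintro _ ⟨z₀, rfl⟩
  by_cases hf0 : f z₀ = 0
  · unfold sigWeight
    rw [hf0]
    simp only [norm_zero, zero_mul]
    positivity
  set p : En n := imv z₀ with hp
  have hpj : ∀ j, p j = (z₀ j).im := fun j => rfl
  set ε : Fin n → ℝ := fun j => if 0 ≤ p j then 1 else -1 with hε
  have hεabs : ∀ j, |ε j| = 1 := fun j => by
    by_cases h : 0 ≤ p j <;> simp [hε, h]
  have hεp : ∀ j, ε j * p j = |p j| := fun j => by
    by_cases h : 0 ≤ p j
    · simp [hε, h, abs_of_nonneg h]
    · push_neg at h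
      rw [abs_of_neg h]
      simp [hε, not_le.2 h]
  set g : Cn n → ℂ := fun z => f z * ∏ j, (1 - Complex.I * (ε j : ℂ) * z j)^m with hg_def
  have hgd : Differentiable ℂ g := by
    apply hdiff.fun_mul
    have hfac_diff : ∀ s : Finset (Fin n),
        Differentiable ℂ (fun y : Cn n => ∏ j ∈ s, (1 - Complex.I * (ε j : ℂ) * y j)^m) := by
      intro s
      induction s using Finset.induction_on with
      | empty => simpa using differentiable_const (1:ℂ)
      | insert j s' hnot ih =>
        have hcoord : Differentiable ℂ fun z : Cn n => z j :=
          (PiLp.proj (𝕜 := ℂ) (p := 2) (fun _ : Fin n => ℂ) j).differentiable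
        have hj : Differentiable ℂ fun y : Cn n => (1 - Complex.I * (ε j : ℂ) * y j)^m :=
          Differentiable.fun_pow
            ((differentiable_const _).fun_sub ((differentiable_const _).fun_mul hcoord)) m
        have heq : (fun y : Cn n => ∏ k ∈ insert j s', (1 - Complex.I * (ε k : ℂ) * y k)^m)
            = fun y : Cn n => (1 - Complex.I * (ε j : ℂ) * y j)^m *
              ∏ k ∈ s', (1 - Complex.I * (ε k : ℂ) * y k)^m := by
          funext y
          rw [Finset.prod_insert hnot]
        rw [heq]
        exact hj.fun_mul ih
    exact hfac_diff Finset.univ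
  have hfB : ∀ z : Cn n, ‖f z‖ * (1 + ‖z‖)^(n*m) ≤ Bp * Real.exp (φ ν (imv z)) := by
    intro z
    have h1 : pWeight (φ ν) (n*m) f z ≤ B := hB (Set.mem_range_self z)
    unfold pWeight at h1
    calc ‖f z‖ * (1 + ‖z‖)^(n*m)
        = (‖f z‖ * (1 + ‖z‖)^(n*m) * Real.exp (-(φ ν (imv z)))) *
          Real.exp (φ ν (imv z)) := by
          rw [mul_assoc, ← Real.exp_add]
          simp
      _ ≤ Bp * Real.exp (φ ν (imv z)) :=
          mul_le_mul_of_nonneg_right (le_trans h1 (le_max_left B 1))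
            (le_of_lt (Real.exp_pos _))
  have habs_g : ∀ z : Cn n, ‖g z‖ =
      ‖f z‖ * ∏ j, (‖1 - Complex.I * (ε j : ℂ) * z j‖)^m := by
    intro z
    show ‖f z * ∏ j, (1 - Complex.I * (ε j : ℂ) * z j)^m‖ = _
    rw [norm_mul, norm_prod]
    congr 1
    exact Finset.prod_congr rfl fun j _ => norm_pow _ _
  have hΦc : Continuous (fun y : En n => φ ν y + Real.log Bp) :=
    (hA ν).1.add continuous_const
  have hgb : ∀ z : Cn n, ‖g z‖ ≤
      Real.exp ((fun y : En n => φ ν y + Real.log Bp) (imv z)) := by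
    intro z
    have h2 : ∀ j, ‖1 - Complex.I * (ε j : ℂ) * z j‖ ≤ 1 + ‖z‖ := by
      intro j
      have h3 : ‖1 - Complex.I * (ε j : ℂ) * z j‖ ≤
          ‖(1:ℂ)‖ + ‖Complex.I * (ε j : ℂ) * z j‖ := by
        have := norm_sub_le (1 : ℂ) (Complex.I * (ε j : ℂ) * z j)
        simpa using this
      have h4 : ‖Complex.I * (ε j : ℂ) * z j‖ = ‖z j‖ := by
        rw [norm_mul, norm_mul, Complex.norm_I, Complex.norm_real, Real.norm_eq_abs, hεabs j]
        ring
      rw [h4] at h3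
      simp only [norm_one] at h3
      linarith [coord_le_norm z j]
    have h5 : ∏ j, (‖1 - Complex.I * (ε j : ℂ) * z j‖)^m ≤ (1 + ‖z‖)^(n*m) := by
      calc ∏ j, (‖1 - Complex.I * (ε j : ℂ) * z j‖)^m
          ≤ ∏ _j : Fin n, (1 + ‖z‖)^m :=
            Finset.prod_le_prod (fun j _ => pow_nonneg (norm_nonneg _) m)
              (fun j _ => pow_le_pow_left₀ (norm_nonneg _) (h2 j) m)
        _ = (1 + ‖z‖)^(n*m) := by
            rw [Finset.prod_const, Finset.card_univ, Fintype.card_fin, ← pow_mul,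
              Nat.mul_comm m n]
    calc ‖g z‖
        = ‖f z‖ * ∏ j, (‖1 - Complex.I * (ε j : ℂ) * z j‖)^m :=
          habs_g z
      _ ≤ ‖f z‖ * (1 + ‖z‖)^(n*m) :=
          mul_le_mul_of_nonneg_left h5 (norm_nonneg _)
      _ ≤ Bp * Real.exp (φ ν (imv z)) := hfB z
      _ = Real.exp (φ ν (imv z) + Real.log Bp) := by
          rw [Real.exp_add, Real.exp_log hBp1]
          ring
  have hfac : ∀ j, (1 - Complex.I * (ε j : ℂ) * z₀ j) ≠ 0 := by
    intro j hzero
    have hre : (1 - Complex.I * (ε j : ℂ) * z₀ j).re = 1 + ε j * (z₀ j).im := by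
      simp [Complex.mul_re, Complex.mul_im]
    rw [hzero] at hre
    simp only [Complex.zero_re] at hre
    have h6 : ε j * (z₀ j).im = |p j| := by rw [← hpj j]; exact hεp j
    rw [h6] at hre
    have := abs_nonneg (p j)
    linarith
  have hgz₀ : g z₀ ≠ 0 := by
    show f z₀ * ∏ j, (1 - Complex.I * (ε j : ℂ) * z₀ j)^m ≠ 0
    apply mul_ne_zero hf0
    rw [Finset.prod_ne_zero_iff]
    exact fun j _ => pow_ne_zero m (hfac j)
  obtain ⟨t, c, hmin, hval⟩ := key_minorant g hgd
    (fun y => φ ν y + Real.log Bp) hΦc hgb z₀ hgz₀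
  -- flip the slopes to be usable at |p|
  have hmin' : ∀ y : En n, (∑ j, |t j| * y j) + c ≤ φ ν y + Real.log Bp := by
    intro y
    set y' : En n := WithLp.toLp 2 (fun j => if 0 ≤ t j then y j else -(y j)) with hy'
    have h7 : ∀ j, t j * y' j = |t j| * y j := by
      intro j
      by_cases h : 0 ≤ t j
      · show t j * (if 0 ≤ t j then y j else -(y j)) = |t j| * y j
        rw [if_pos h, abs_of_nonneg h]
      · push_neg at h
        show t j * (if 0 ≤ t j then y j else -(y j)) = |t j| * y j
        rw [if_neg (not_le.2 h), abs_of_neg h]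
        ring
    have h8 : φ ν y' = φ ν y := by
      have e1 := (hA ν).2.1 y'
      have e2 := (hA ν).2.1 y
      rw [e1, e2]
      congr 2
      funext j
      show |if 0 ≤ t j then y j else -(y j)| = |y j|
      by_cases h : 0 ≤ t j
      · rw [if_pos h]
      · rw [if_neg h, abs_neg]
    have h9 := hmin y'
    simp only [h8] at h9
    calc (∑ j, |t j| * y j) + c = (∑ j, t j * y' j) + c := by
          rw [Finset.sum_congr rfl fun j _ => (h7 j).symm]
      _ ≤ φ ν y + Real.log Bp := h9
  have hval' : Real.log (‖g z₀‖) - 1 ≤ (∑ j, |t j| * |p j|) + c := by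
    refine le_trans hval ?_
    have h10 : ∀ j ∈ Finset.univ, t j * imv z₀ j ≤ |t j| * |p j| := fun j _ => by
      calc t j * imv z₀ j ≤ |t j * imv z₀ j| := le_abs_self _
        _ = |t j| * |p j| := by rw [abs_mul]
    have := Finset.sum_le_sum h10
    linarith
  set u₀ : En n := WithLp.toLp 2 (fun j => Real.log (1 + |(z₀ j).im|)) with hu₀
  have hu₀p : ∀ j, u₀ j = Real.log (1 + |p j|) := fun j => rfl
  set c₃ : ℝ := ((∑ j, |t j| * |p j|) + c) - (∑ j, (|t j| * (1 + |p j|)) * u₀ j)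
    - C₀ - Real.log Bp with hc₃
  set a' : En n := WithLp.toLp 2 (fun j => |t j| * (1 + |p j|) + m) with ha'
  have ha'j : ∀ j, a' j = |t j| * (1 + |p j|) + m := fun j => rfl
  -- the affine minorant of expComp (φ (ν+1))
  have hmin'' : ∀ v : En n, (∑ j, a' j * v j) + c₃ ≤ expComp (φ (ν+1)) v := by
    intro v
    set ev : En n := WithLp.toLp 2 (fun j => Real.exp (v j)) with hev
    have hevj : ∀ j, ev j = Real.exp (v j) := fun j => rfl
    have hev_pos : ∀ j, 0 < ev j := fun j => Real.exp_pos _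
    have hln : ∀ j ∈ Finset.univ, (|t j| * (1 + |p j|)) * v j ≤
        (|t j| * (1 + |p j|)) * u₀ j + (|t j| * ev j - |t j| * (1 + |p j|)) := by
      intro j _
      have hpj2 : (0:ℝ) < 1 + |p j| := by positivity
      have hw : Real.log (ev j / (1 + |p j|)) ≤ ev j / (1 + |p j|) - 1 :=
        Real.log_le_sub_one_of_pos (by positivity)
      have hlog : Real.log (ev j / (1 + |p j|)) = v j - u₀ j := by
        rw [Real.log_div (ne_of_gt (hev_pos j)) (ne_of_gt hpj2), hevj j, Real.log_exp,
          hu₀p j]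
      rw [hlog] at hw
      have h11 : (|t j| * (1 + |p j|)) * (v j - u₀ j) ≤
          (|t j| * (1 + |p j|)) * (ev j / (1 + |p j|) - 1) :=
        mul_le_mul_of_nonneg_left hw (by positivity)
      have h12 : (|t j| * (1 + |p j|)) * (ev j / (1 + |p j|) - 1)
          = |t j| * ev j - |t j| * (1 + |p j|) := by
        field_simp
      rw [h12] at h11
      linarith
    have hsum1 := Finset.sum_le_sum hln
    rw [Finset.sum_add_distrib, Finset.sum_sub_distrib] at hsum1
    have hminEv := hmin' ev
    have hsum_t : (0:ℝ) ≤ ∑ j, |t j| := Finset.sum_nonneg fun j _ => abs_nonneg _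
    have hsplit : ∀ j, |t j| * ev j = |t j| * ev j := fun j => rfl
    have hsum_tp : (∑ j, |t j| * |p j|) - (∑ j, |t j| * (1 + |p j|)) ≤ 0 := by
      rw [← Finset.sum_sub_distrib]
      apply Finset.sum_nonpos
      intro j _
      have : |t j| * |p j| ≤ |t j| * (1 + |p j|) :=
        mul_le_mul_of_nonneg_left (by linarith [abs_nonneg (p j)]) (abs_nonneg _)
      linarith
    -- log absorption
    have hlog_nonneg : (0:ℝ) ≤ Real.log (1 + ‖ev‖) :=
      Real.log_nonneg (by linarith [norm_nonneg ev])
    have hlogsum : (m:ℝ) * (∑ j, v j) ≤ (((n*m : ℕ):ℝ) + 1) * Real.log (1 + ‖ev‖) := by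
      by_cases hn0 : (∑ j, v j) ≤ 0
      · have h13 : (m:ℝ) * (∑ j, v j) ≤ 0 :=
          mul_nonpos_of_nonneg_of_nonpos (Nat.cast_nonneg m) hn0
        have h14 : (0:ℝ) ≤ (((n*m : ℕ):ℝ) + 1) * Real.log (1 + ‖ev‖) := by positivity
        linarith
      · push_neg at hn0
        have hvj : ∀ j ∈ Finset.univ, v j ≤ Real.log (1 + ‖ev‖) := by
          intro j _
          have h15 : ev j ≤ ‖ev‖ := le_trans (le_abs_self _) (coord_le_norm' ev j)
          have h16 : ev j ≤ 1 + ‖ev‖ := by linarith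
          calc v j = Real.log (ev j) := by rw [hevj j, Real.log_exp]
            _ ≤ Real.log (1 + ‖ev‖) :=
                (Real.log_le_log_iff (hev_pos j) (by positivity)).mpr h16
        have h17 : (∑ j, v j) ≤ (n:ℝ) * Real.log (1 + ‖ev‖) := by
          calc (∑ j, v j) ≤ ∑ _j : Fin n, Real.log (1 + ‖ev‖) := Finset.sum_le_sum hvj
            _ = (n:ℝ) * Real.log (1 + ‖ev‖) := by
                rw [Finset.sum_const, Finset.card_univ, Fintype.card_fin, nsmul_eq_mul]
        calc (m:ℝ) * (∑ j, v j) ≤ (m:ℝ) * ((n:ℝ) * Real.log (1 + ‖ev‖)) :=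
              mul_le_mul_of_nonneg_left h17 (Nat.cast_nonneg m)
          _ = ((n*m : ℕ):ℝ) * Real.log (1 + ‖ev‖) := by
              push_cast
              ring
          _ ≤ (((n*m : ℕ):ℝ) + 1) * Real.log (1 + ‖ev‖) := by nlinarith
    have hi0ev := hC₀ ev
    have hexp_eq : expComp (φ (ν+1)) v = φ (ν+1) ev := rfl
    rw [hexp_eq]
    have hsplit2 : (∑ j, a' j * v j) = (∑ j, (|t j| * (1 + |p j|)) * v j)
        + (m:ℝ) * (∑ j, v j) := by
      rw [Finset.mul_sum, ← Finset.sum_add_distrib]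
      refine Finset.sum_congr rfl fun j _ => ?_
      rw [ha'j j]
      ring
    rw [hsplit2, hc₃]
    linarith
  have hdd1 := le_ddconj (expComp (φ (ν+1))) a' c₃ hmin'' u₀
  have hdd2 := ddconj_le (expComp (φ (ν+1))) u₀
  obtain ⟨hlo, _hhi⟩ := toReal_bounds hdd1 hdd2
  -- rearrange the lower bound
  have hlosum : (∑ j, u₀ j * a' j) = (∑ j, (|t j| * (1 + |p j|)) * u₀ j)
      + (m:ℝ) * (∑ j, u₀ j) := by
    rw [Finset.mul_sum, ← Finset.sum_add_distrib]
    refine Finset.sum_congr rfl fun j _ => ?_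
    rw [ha'j j]
    ring
  have hlo2 : (Real.log (‖g z₀‖) - 1) + (m:ℝ) * (∑ j, u₀ j)
      - C₀ - Real.log Bp ≤ (ddconj (expComp (φ (ν+1))) u₀).toReal := by
    rw [hlosum] at hlo
    rw [hc₃] at hlo
    linarith
  -- numeric endgame
  set Q : ℝ := ∏ j, (1 + |p j|)^m with hQ
  set P : ℝ := ∏ j, (‖1 - Complex.I * (ε j : ℂ) * z₀ j‖)^m with hP
  have hQpos : 0 < Q := by
    rw [hQ]
    apply Finset.prod_pos
    intro j _
    positivity
  have hPpos : 0 < P := by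
    rw [hP]
    apply Finset.prod_pos
    intro j _
    have := norm_pos_iff.mpr (hfac j)
    positivity
  have hGpos : 0 < ‖g z₀‖ := norm_pos_iff.mpr hgz₀
  have hQeq : Real.exp ((m:ℝ) * ∑ j, u₀ j) = Q := by
    rw [Finset.mul_sum, Real.exp_sum, hQ]
    refine Finset.prod_congr rfl fun j _ => ?_
    rw [Real.exp_nat_mul, hu₀p j, Real.exp_log (by positivity)]
  have hexp_bound : Real.exp (-(ddconj (expComp (φ (ν+1))) u₀).toReal) ≤
      Real.exp (1 + C₀ + Real.log Bp) * (‖g z₀‖ * Q)⁻¹ := by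
    have h18 : -(ddconj (expComp (φ (ν+1))) u₀).toReal ≤
        (1 + C₀ + Real.log Bp) - (Real.log (‖g z₀‖) + (m:ℝ) * ∑ j, u₀ j) := by
      linarith
    calc Real.exp (-(ddconj (expComp (φ (ν+1))) u₀).toReal)
        ≤ Real.exp ((1 + C₀ + Real.log Bp)
          - (Real.log (‖g z₀‖) + (m:ℝ) * ∑ j, u₀ j)) := Real.exp_le_exp.2 h18
      _ = Real.exp (1 + C₀ + Real.log Bp) * (‖g z₀‖ * Q)⁻¹ := by
          have hden : Real.exp (Real.log (‖g z₀‖) + (m:ℝ) * ∑ j, u₀ j)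
              = ‖g z₀‖ * Q := by
            rw [Real.exp_add, Real.exp_log hGpos, hQeq]
          rw [Real.exp_sub, hden, div_eq_mul_inv]
  -- the geometric estimate
  have hkey : (1 + ‖z₀‖)^m ≤ 2^(n*m) * (P * Q) := by
    have hbase : (1 + ‖z₀‖) ≤ ∏ j, (2 * (‖1 - Complex.I * (ε j : ℂ) * z₀ j‖
        * (1 + |p j|))) := by
      have hb1 : 1 + ‖z₀‖ ≤ 1 + ∑ j, ‖z₀ j‖ := by
        linarith [norm_le_sum z₀]
      have hb2 : 1 + ∑ j, ‖z₀ j‖ ≤ ∏ j, (1 + ‖z₀ j‖) :=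
        one_add_sum_le_prod _ (fun j => norm_nonneg _)
      have hb3 : ∀ j ∈ Finset.univ, 1 + ‖z₀ j‖ ≤
          2 * (‖1 - Complex.I * (ε j : ℂ) * z₀ j‖ * (1 + |p j|)) := by
        intro j _
        have hre : (1 - Complex.I * (ε j : ℂ) * z₀ j).re = 1 + |p j| := by
          have hre0 : (1 - Complex.I * (ε j : ℂ) * z₀ j).re = 1 + ε j * (z₀ j).im := by
            simp [Complex.mul_re, Complex.mul_im]
          rw [hre0, ← hpj j, hεp j]
        have him : |(1 - Complex.I * (ε j : ℂ) * z₀ j).im| = |(z₀ j).re| := by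
          have him0 : (1 - Complex.I * (ε j : ℂ) * z₀ j).im = -(ε j * (z₀ j).re) := by
            simp [Complex.mul_re, Complex.mul_im]
          rw [him0, abs_neg, abs_mul, hεabs j, one_mul]
        -- |z₀ j| ≤ |re| + |im|
        have hz1 : ‖z₀ j‖ ≤ |(z₀ j).re| + |(z₀ j).im| :=
          Complex.norm_le_abs_re_add_abs_im (z₀ j)
        -- (1 + |re|) ≤ 2 * abs(1 - I ε z)
        have habs2 : (1 + |(z₀ j).re|) ≤ 2 * ‖1 - Complex.I * (ε j : ℂ) * z₀ j‖ := by
          apply le_of_sq_le_sq'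
          · have hsq : (‖1 - Complex.I * (ε j : ℂ) * z₀ j‖)^2
                = (1 + |p j|)^2 + ((z₀ j).re)^2 := by
              rw [Complex.sq_norm, Complex.normSq_apply, hre]
              have h19 : ((1 - Complex.I * (ε j : ℂ) * z₀ j).im)^2 = ((z₀ j).re)^2 := by
                rw [← sq_abs, him, sq_abs]
              rw [← h19]
              ring
            have h20 : (1 + |(z₀ j).re|)^2 ≤ 2 * ((1 + |p j|)^2 + ((z₀ j).re)^2) := by
              have h21 : 2 * |(z₀ j).re| ≤ 1 + ((z₀ j).re)^2 := by
                nlinarith [sq_nonneg (1 - |(z₀ j).re|), sq_abs ((z₀ j).re)]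
              have h22 : (1:ℝ) ≤ (1 + |p j|)^2 := by nlinarith [abs_nonneg (p j)]
              nlinarith [sq_abs ((z₀ j).re)]
            calc (1 + |(z₀ j).re|)^2 ≤ 2 * ((1 + |p j|)^2 + ((z₀ j).re)^2) := h20
              _ ≤ (2 * ‖1 - Complex.I * (ε j : ℂ) * z₀ j‖)^2 := by
                  rw [mul_pow, hsq]
                  nlinarith [norm_nonneg
                    (1 - Complex.I * (ε j : ℂ) * z₀ j), hsq]
          · positivity
        have hppos : (0:ℝ) ≤ 1 + |p j| := by positivity
        calc 1 + ‖z₀ j‖ ≤ 1 + |(z₀ j).re| + |(z₀ j).im| := by linarith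
          _ ≤ (1 + |(z₀ j).re|) * (1 + |(z₀ j).im|) := by
              nlinarith [abs_nonneg ((z₀ j).re), abs_nonneg ((z₀ j).im)]
          _ = (1 + |(z₀ j).re|) * (1 + |p j|) := by rw [hpj j]
          _ ≤ (2 * ‖1 - Complex.I * (ε j : ℂ) * z₀ j‖) * (1 + |p j|) :=
              mul_le_mul_of_nonneg_right habs2 hppos
          _ = 2 * (‖1 - Complex.I * (ε j : ℂ) * z₀ j‖ * (1 + |p j|)) := by ring
      calc 1 + ‖z₀‖ ≤ 1 + ∑ j, ‖z₀ j‖ := hb1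
        _ ≤ ∏ j, (1 + ‖z₀ j‖) := hb2
        _ ≤ ∏ j, (2 * (‖1 - Complex.I * (ε j : ℂ) * z₀ j‖ * (1 + |p j|))) :=
            Finset.prod_le_prod (fun j _ => by positivity) hb3
    have hprod_eq : ∏ j, (2 * (‖1 - Complex.I * (ε j : ℂ) * z₀ j‖
        * (1 + |p j|))) = 2^n * ∏ j, (‖1 - Complex.I * (ε j : ℂ) * z₀ j‖
        * (1 + |p j|)) := by
      rw [Finset.prod_mul_distrib, Finset.prod_const, Finset.card_univ, Fintype.card_fin]
    have hz₀nn : (0:ℝ) ≤ 1 + ‖z₀‖ := by positivity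
    calc (1 + ‖z₀‖)^m ≤ (2^n * ∏ j, (‖1 - Complex.I * (ε j : ℂ) * z₀ j‖
          * (1 + |p j|)))^m := by
          apply pow_le_pow_left₀ hz₀nn
          rw [← hprod_eq]
          exact hbase
      _ = 2^(n*m) * (P * Q) := by
          rw [mul_pow, ← pow_mul, ← Finset.prod_pow, hP, hQ, ← Finset.prod_mul_distrib]
          congr 1
          refine Finset.prod_congr rfl fun j _ => ?_
          rw [mul_pow]
  -- final computation
  have hGeq : ‖g z₀‖ = ‖f z₀‖ * P := habs_g z₀
  have hkey2 : ‖f z₀‖ * (1 + ‖z₀‖)^m ≤ 2^(n*m) * (‖g z₀‖ * Q) := by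
    calc ‖f z₀‖ * (1 + ‖z₀‖)^m
        ≤ ‖f z₀‖ * (2^(n*m) * (P * Q)) :=
          mul_le_mul_of_nonneg_left hkey (norm_nonneg _)
      _ = 2^(n*m) * ((‖f z₀‖ * P) * Q) := by ring
      _ = 2^(n*m) * (‖g z₀‖ * Q) := by rw [← hGeq]
  have hGQpos : (0:ℝ) < ‖g z₀‖ * Q := mul_pos hGpos hQpos
  show sigWeight (φ (ν+1)) m f z₀ ≤ Real.exp (1 + C₀ + Real.log Bp) * 2^(n*m)
  unfold sigWeight
  calc ‖f z₀‖ * (1 + ‖z₀‖)^m *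
      Real.exp (-(ddconj (expComp (φ (ν+1))) (WithLp.toLp 2 (fun j => Real.log (1 + |(z₀ j).im|)))).toReal)
      ≤ ‖f z₀‖ * (1 + ‖z₀‖)^m *
        (Real.exp (1 + C₀ + Real.log Bp) * (‖g z₀‖ * Q)⁻¹) := by
        apply mul_le_mul_of_nonneg_left _ (by positivity)
        exact hexp_bound
    _ = Real.exp (1 + C₀ + Real.log Bp) *
        ((‖f z₀‖ * (1 + ‖z₀‖)^m) * (‖g z₀‖ * Q)⁻¹) := by ring
    _ ≤ Real.exp (1 + C₀ + Real.log Bp) *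
        ((2^(n*m) * (‖g z₀‖ * Q)) * (‖g z₀‖ * Q)⁻¹) := by
        apply mul_le_mul_of_nonneg_left _ (le_of_lt (Real.exp_pos _))
        exact mul_le_mul_of_nonneg_right hkey2 (inv_nonneg.2 (le_of_lt hGQpos))
    _ = Real.exp (1 + C₀ + Real.log Bp) * 2^(n*m) := by
        rw [mul_inv_cancel_right₀ (ne_of_gt hGQpos)]

end S5

theorem stmt5 (n : ℕ) (φ : ℕ → En n → ℝ)
    (hA : ∀ ν, IsA (φ ν))
    (hi0 : ∀ ν : ℕ, ∀ A > (0:ℝ), ∃ C > (0:ℝ), ∀ x : En n,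
      φ ν x + A * Real.log (1 + ‖x‖) ≤ φ (ν+1) x + C)
    (hi1 : ∀ ν : ℕ, ∃ σ > (1:ℝ), ∃ γ > (0:ℝ), ∀ x : En n, φ ν (σ • x) ≤ φ (ν+1) x + γ)
    (hi2 : ∀ ν : ℕ, ∃ K > (0:ℝ), ∀ x ξ : En n, (∀ j, 0 ≤ x j) → (∀ j, ξ j ∈ Set.Icc (0:ℝ) 1) →
      φ ν (x + ξ) ≤ φ (ν+1) x + K) :
    {f : Cn n → ℂ | ∃ ν, memE (φ ν) f} = {f : Cn n → ℂ | ∃ ν, memH (φ ν) f} := by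
  ext f
  simp only [Set.mem_setOf_eq]
  constructor
  · rintro ⟨ν, hf⟩
    exact ⟨ν + 1, S5.hard_dir φ hA hi0 ν f hf⟩
  · rintro ⟨ν, hf⟩
    exact ⟨ν + 1, S5.easy_dir φ hA hi2 ν f hf⟩
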